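/- Let $Q$ be a polynomial in $n$ variables of degree at most $d$, and define $\|Q\|_I := \sup_{x,x' \in I} |Q(x)-Q(x')|$. Then for any $x \in \mathbb{R}^n$ and $0 < r \leq R$, one has $\|Q\|_{B(x,r)} \leq C_{d,n} (r/R) \|Q\|_{B(x,R)}$ for a constant $C_{d,n}$ depending only on $d$ and $n$. -/

import Mathlib

/-- The seminorm `‖Q‖_I := sup_{x,x' ∈ I} |Q(x)-Q(x')|` of a polynomial on a set `I`. -/
noncomputable def polySeminorm (n : ℕ) (Q : MvPolynomial (Fin n) ℝ)
    (I : Set (EuclideanSpace ℝ (Fin n))) : ℝ :=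
  sSup {t : ℝ | ∃ a ∈ I, ∃ b ∈ I,
    t = |MvPolynomial.eval (fun i => a i) Q - MvPolynomial.eval (fun i => b i) Q|}

open MvPolynomial Metric Finset
section
variable (d n : ℕ)
noncomputable def monSet : Finset (Fin n →₀ ℕ) := by
  classical
  exact (Finset.Iic (Finsupp.equivFunOnFinite.symm (fun _ : Fin n => d))).filter
    (fun α => (α.sum fun _ e => e) ≤ d ∧ α ≠ 0)

theorem mem_monSet {α : Fin n →₀ ℕ} :
    α ∈ monSet d n ↔ (α.sum fun _ e => e) ≤ d ∧ α ≠ 0 := by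
  classical
  simp only [monSet, Finset.mem_filter, Finset.mem_Iic, and_iff_right_iff_imp]
  rintro ⟨hs, -⟩
  intro j
  show α j ≤ d
  calc α j ≤ α.sum fun _ e => e := by
        rcases em (j ∈ α.support) with h | h
        · exact Finset.single_le_sum (fun _ _ => Nat.zero_le _) h
        · simp [Finsupp.notMem_support_iff.mp h]
    _ ≤ d := hs

/-- coefficient space -/
abbrev V := (↥(monSet d n)) → ℝ

/-- evaluation of a coefficient vector as a polynomial function -/
noncomputable def ev (c : V d n) (x : EuclideanSpace ℝ (Fin n)) : ℝ :=
  ∑ i : ↥(monSet d n), c i * ∏ j : Fin n, x j ^ (i.1 j)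

/-- the oscillation set over a ball of radius ρ -/
def oscSet (c : V d n) (ρ : ℝ) : Set ℝ :=
  {t : ℝ | ∃ a ∈ ball (0 : EuclideanSpace ℝ (Fin n)) ρ, ∃ b ∈ ball (0 : EuclideanSpace ℝ (Fin n)) ρ,
    t = |ev d n c a - ev d n c b|}

noncomputable def NN (c : V d n) (ρ : ℝ) : ℝ := sSup (oscSet d n c ρ)

variable {d n}

theorem ev_add (c c' : V d n) (x : EuclideanSpace ℝ (Fin n)) :
    ev d n (c + c') x = ev d n c x + ev d n c' x := by
  simp [ev, add_mul, Finset.sum_add_distrib]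

theorem ev_smul (t : ℝ) (c : V d n) (x : EuclideanSpace ℝ (Fin n)) :
    ev d n (t • c) x = t * ev d n c x := by
  simp [ev, Finset.mul_sum, mul_assoc]

theorem ev_sub (c c' : V d n) (x : EuclideanSpace ℝ (Fin n)) :
    ev d n (c - c') x = ev d n c x - ev d n c' x := by
  simp [ev, sub_mul, Finset.sum_sub_distrib]

theorem abs_coord_le {x : EuclideanSpace ℝ (Fin n)} (j : Fin n) : |x j| ≤ ‖x‖ := by
  rw [EuclideanSpace.norm_eq]
  rw [show |x j| = Real.sqrt (‖x j‖ ^ 2) by simp [Real.sqrt_sq_eq_abs]]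
  apply Real.sqrt_le_sqrt
  exact Finset.single_le_sum (f := fun j => ‖x j‖ ^ 2) (fun _ _ => sq_nonneg _) (Finset.mem_univ j)

theorem abs_ev_le {c : V d n} {x : EuclideanSpace ℝ (Fin n)} (hx : ‖x‖ ≤ 1) :
    |ev d n c x| ≤ ∑ i : ↥(monSet d n), |c i| := by
  refine (Finset.abs_sum_le_sum_abs _ _).trans (Finset.sum_le_sum fun i _ => ?_)
  rw [abs_mul]
  have : |∏ j : Fin n, x j ^ (i.1 j)| ≤ 1 := by
    rw [Finset.abs_prod]
    apply Finset.prod_le_one (fun _ _ => abs_nonneg _)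
    intro j _
    rw [abs_pow]
    exact pow_le_one₀ (abs_nonneg _) ((abs_coord_le j).trans hx)
  calc |c i| * |∏ j : Fin n, x j ^ (i.1 j)| ≤ |c i| * 1 :=
        mul_le_mul_of_nonneg_left this (abs_nonneg _)
    _ = |c i| := mul_one _

theorem oscSet_nonempty (c : V d n) {ρ : ℝ} (hρ : 0 < ρ) : (oscSet d n c ρ).Nonempty := by
  refine ⟨0, 0, by simpa using hρ, 0, by simpa using hρ, by simp⟩

theorem oscSet_nonneg {c : V d n} {ρ : ℝ} {t : ℝ} (ht : t ∈ oscSet d n c ρ) : 0 ≤ t := by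
  obtain ⟨a, -, b, -, rfl⟩ := ht; exact abs_nonneg _

theorem oscSet_bddAbove (c : V d n) {ρ : ℝ} (hρ : ρ ≤ 1) :
    BddAbove (oscSet d n c ρ) := by
  refine ⟨2 * ∑ i : ↥(monSet d n), |c i|, ?_⟩
  rintro t ⟨a, ha, b, hb, rfl⟩
  rw [mem_ball_zero_iff] at ha hb
  have h1 := abs_ev_le (c := c) (x := a) (le_of_lt (lt_of_lt_of_le ha hρ))
  have h2 := abs_ev_le (c := c) (x := b) (le_of_lt (lt_of_lt_of_le hb hρ))
  calc |ev d n c a - ev d n c b| ≤ |ev d n c a| + |ev d n c b| := abs_sub _ _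
    _ ≤ _ := by linarith

theorem NN_nonneg (c : V d n) (ρ : ℝ) : 0 ≤ NN d n c ρ :=
  Real.sSup_nonneg (fun _ ht => oscSet_nonneg ht)

theorem NN_le (c : V d n) {ρ : ℝ} (hρ : ρ ≤ 1) :
    NN d n c ρ ≤ 2 * ∑ i : ↥(monSet d n), |c i| := by
  apply Real.sSup_le
  · rintro t ⟨a, ha, b, hb, rfl⟩
    rw [mem_ball_zero_iff] at ha hb
    have h1 := abs_ev_le (c := c) (x := a) (le_of_lt (lt_of_lt_of_le ha hρ))
    have h2 := abs_ev_le (c := c) (x := b) (le_of_lt (lt_of_lt_of_le hb hρ))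
    calc |ev d n c a - ev d n c b| ≤ |ev d n c a| + |ev d n c b| := abs_sub _ _
      _ ≤ _ := by linarith
  · positivity

theorem le_NN {c : V d n} {ρ : ℝ} (hρ : ρ ≤ 1) {a b : EuclideanSpace ℝ (Fin n)}
    (ha : a ∈ ball (0 : EuclideanSpace ℝ (Fin n)) ρ) (hb : b ∈ ball (0 : EuclideanSpace ℝ (Fin n)) ρ) :
    |ev d n c a - ev d n c b| ≤ NN d n c ρ :=
  le_csSup (oscSet_bddAbove c hρ) ⟨a, ha, b, hb, rfl⟩

theorem NN_sub_le (c c' : V d n) {ρ : ℝ} (hρ0 : 0 < ρ) (hρ : ρ ≤ 1) :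
    NN d n c ρ ≤ NN d n c' ρ + NN d n (c - c') ρ := by
  apply Real.sSup_le
  · rintro t ⟨a, ha, b, hb, rfl⟩
    have h1 := le_NN (c := c') hρ ha hb
    have h2 := le_NN (c := c - c') hρ ha hb
    have e : ev d n c a - ev d n c b =
        (ev d n c' a - ev d n c' b) + (ev d n (c - c') a - ev d n (c - c') b) := by
      rw [ev_sub, ev_sub]; ring
    calc |ev d n c a - ev d n c b| ≤ |ev d n c' a - ev d n c' b| + |ev d n (c - c') a - ev d n (c - c') b| := by
          rw [e]; exact abs_add_le _ _
      _ ≤ _ := by linarith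
  · have := NN_nonneg c' ρ; have := NN_nonneg (c - c') ρ; linarith

theorem NN_smul_le (t : ℝ) (c : V d n) {ρ : ℝ} (hρ0 : 0 < ρ) (hρ : ρ ≤ 1) (ht : 0 ≤ t) :
    NN d n (t • c) ρ ≤ t * NN d n c ρ := by
  apply Real.sSup_le
  · rintro s ⟨a, ha, b, hb, rfl⟩
    rw [ev_smul, ev_smul, ← mul_sub, abs_mul, abs_of_nonneg ht]
    exact mul_le_mul_of_nonneg_left (le_NN hρ ha hb) ht
  · exact mul_nonneg ht (NN_nonneg c ρ)

theorem NN_smul (t : ℝ) (c : V d n) {ρ : ℝ} (hρ0 : 0 < ρ) (hρ : ρ ≤ 1) (ht : 0 < t) :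
    NN d n (t • c) ρ = t * NN d n c ρ := by
  refine le_antisymm (NN_smul_le t c hρ0 hρ ht.le) ?_
  have h := NN_smul_le t⁻¹ (t • c) hρ0 hρ (by positivity)
  rw [smul_smul, inv_mul_cancel₀ ht.ne', one_smul] at h
  calc t * NN d n c ρ ≤ t * (t⁻¹ * NN d n (t • c) ρ) := by
        exact mul_le_mul_of_nonneg_left h ht.le
    _ = NN d n (t • c) ρ := by field_simp

theorem NN_continuous : Continuous (fun c : V d n => NN d n c 1) := by
  have key : ∀ c c' : V d n, NN d n c 1 - NN d n c' 1 ≤ 2 * ∑ i : ↥(monSet d n), |(c - c') i| := by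
    intro c c'
    have h := NN_sub_le c c' one_pos le_rfl
    have h2 := NN_le (c - c') (le_refl (1:ℝ))
    linarith
  rw [continuous_iff_continuousAt]
  intro c₀
  have hg : Filter.Tendsto (fun c : V d n => 2 * ∑ i : ↥(monSet d n), |(c - c₀) i|)
      (nhds c₀) (nhds 0) := by
    have : Continuous (fun c : V d n => 2 * ∑ i : ↥(monSet d n), |(c - c₀) i|) := by
      fun_prop
    have h0 : (fun c : V d n => 2 * ∑ i : ↥(monSet d n), |(c - c₀) i|) c₀ = 0 := by simp
    simpa [h0] using this.tendsto c₀
  have hdiff : Filter.Tendsto (fun c : V d n => NN d n c 1 - NN d n c₀ 1) (nhds c₀) (nhds 0) := by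
    apply squeeze_zero_norm _ hg
    intro c
    rw [Real.norm_eq_abs, abs_sub_le_iff]
    constructor
    · exact key c c₀
    · have := key c₀ c
      have e : ∀ i : ↥(monSet d n), |(c₀ - c) i| = |(c - c₀) i| := by
        intro i; simp [abs_sub_comm]
      rw [Finset.sum_congr rfl (fun i _ => e i)] at this
      linarith
  have := hdiff.add_const (NN d n c₀ 1)
  exact (by simpa using this : Filter.Tendsto (fun x => NN d n x 1) (nhds c₀) (nhds (NN d n c₀ 1)))
end

section
variable {d n : ℕ}

theorem ev_zero_pt (c : V d n) : ev d n c 0 = 0 := by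
  apply Finset.sum_eq_zero
  intro i _
  have hi : i.1 ≠ 0 := ((mem_monSet d n).mp i.2).2
  obtain ⟨j, hj⟩ : ∃ j, i.1 j ≠ 0 := by
    by_contra h
    push_neg at h
    exact hi (Finsupp.ext h)
  have : (fun _ => (0:ℝ)) j ^ (i.1 j) = 0 := by
    simp [pow_eq_zero_iff hj]
  rw [Finset.prod_eq_zero (Finset.mem_univ j) (by simpa using this), mul_zero]

theorem ev_smul_pt (c : V d n) (t : ℝ) (y : EuclideanSpace ℝ (Fin n)) :
    ev d n c (t • y) =
      ∑ i : ↥(monSet d n), c i * (∏ j : Fin n, y j ^ (i.1 j)) * t ^ (i.1.sum fun _ e => e) := by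
  unfold ev
  apply Finset.sum_congr rfl
  intro i _
  have hc : ∀ j : Fin n, (t • y) j = t * y j := fun j => rfl
  have : ∏ j : Fin n, (t • y) j ^ (i.1 j) =
      (∏ j : Fin n, y j ^ (i.1 j)) * t ^ (∑ j : Fin n, i.1 j) := by
    simp_rw [hc, mul_pow, Finset.prod_mul_distrib, Finset.prod_pow_eq_pow_sum]
    ring
  rw [this]
  have hsum : (i.1.sum fun _ e => e) = ∑ j : Fin n, i.1 j :=
    Finsupp.sum_fintype _ _ (fun _ => rfl)
  rw [hsum]; ring

theorem ev_eq_zero_of_NN (c : V d n) (h : NN d n c 1 = 0) (y : EuclideanSpace ℝ (Fin n)) :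
    ev d n c y = 0 := by
  classical
  have hball : ∀ a ∈ ball (0 : EuclideanSpace ℝ (Fin n)) 1, ev d n c a = 0 := by
    intro a ha
    have h0 : (0 : EuclideanSpace ℝ (Fin n)) ∈ ball (0 : EuclideanSpace ℝ (Fin n)) 1 := by
      simp
    have hle := le_NN (c := c) le_rfl ha h0
    rw [h, ev_zero_pt, sub_zero] at hle
    exact abs_nonpos_iff.mp hle
  -- the auxiliary one-variable polynomial along the line through y
  set p : Polynomial ℝ := ∑ i : ↥(monSet d n),
    Polynomial.C (c i * ∏ j : Fin n, y j ^ (i.1 j)) * Polynomial.X ^ (i.1.sum fun _ e => e)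
    with hp
  have hpeval : ∀ t : ℝ, p.eval t = ev d n c (t • y) := by
    intro t
    rw [ev_smul_pt, hp]
    rw [Polynomial.eval_finset_sum]
    apply Finset.sum_congr rfl
    intro i _
    simp only [Polynomial.eval_mul, Polynomial.eval_C, Polynomial.eval_pow, Polynomial.eval_X]
  have hproots : ∀ t : ℝ, |t| < 1 / (‖y‖ + 1) → p.eval t = 0 := by
    intro t ht
    rw [hpeval]
    apply hball
    rw [mem_ball_zero_iff, norm_smul]
    have hy : (0:ℝ) < ‖y‖ + 1 := by positivity
    calc ‖t‖ * ‖y‖ ≤ |t| * (‖y‖ + 1) := by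
          rw [Real.norm_eq_abs]
          exact mul_le_mul_of_nonneg_left (by linarith) (abs_nonneg _)
      _ < (1 / (‖y‖ + 1)) * (‖y‖ + 1) := by
          exact mul_lt_mul_of_pos_right ht hy
      _ = 1 := by field_simp
  have hp0 : p = 0 := by
    apply Polynomial.eq_zero_of_infinite_isRoot
    apply Set.Infinite.mono (s := Set.Ioo (-(1 / (‖y‖ + 1))) (1 / (‖y‖ + 1)))
    · intro t ht
      simp only [Set.mem_Ioo] at ht
      exact hproots t (abs_lt.mpr ⟨ht.1, ht.2⟩)
    · have h01 : (0:ℝ) < 1 / (‖y‖ + 1) := by positivity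
      exact Set.Ioo_infinite (by linarith)
  have := hpeval 1
  rw [hp0] at this
  simpa using this.symm

/-- the polynomial attached to a coefficient vector -/
noncomputable def PofC (c : V d n) : MvPolynomial (Fin n) ℝ :=
  ∑ i : ↥(monSet d n), MvPolynomial.monomial i.1 (c i)

theorem eval_PofC (c : V d n) (y : Fin n → ℝ) :
    MvPolynomial.eval y (PofC c) = ev d n c (WithLp.toLp 2 y) := by
  unfold PofC ev
  rw [map_sum]
  apply Finset.sum_congr rfl
  intro i _
  rw [MvPolynomial.eval_monomial]
  rw [Finsupp.prod_fintype _ _ (fun j => pow_zero _)]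

theorem c_eq_zero_of_NN (c : V d n) (h : NN d n c 1 = 0) : c = 0 := by
  classical
  have hP : PofC c = 0 := by
    apply MvPolynomial.funext
    intro x
    rw [eval_PofC, ev_eq_zero_of_NN c h (WithLp.toLp 2 x)]
    simp
  funext i
  have hco := congrArg (MvPolynomial.coeff i.1) hP
  rw [MvPolynomial.coeff_zero] at hco
  unfold PofC at hco
  rw [MvPolynomial.coeff_sum] at hco
  have : ∀ i' : ↥(monSet d n),
      MvPolynomial.coeff i.1 (MvPolynomial.monomial i'.1 (c i')) = if i' = i then c i' else 0 := by
    intro i'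
    rw [MvPolynomial.coeff_monomial]
    congr 1
    exact propext Subtype.ext_iff.symm
  rw [Finset.sum_congr rfl (fun i' _ => this i')] at hco
  rw [Finset.sum_ite_eq' Finset.univ i (fun i' => c i')] at hco
  simpa using hco

theorem exists_lower (hne : Nonempty ↥(monSet d n)) :
    ∃ m : ℝ, 0 < m ∧ ∀ c : V d n, m * ‖c‖ ≤ NN d n c 1 := by
  have hK : IsCompact (Metric.sphere (0 : V d n) 1) := isCompact_sphere _ _
  have hKne : (Metric.sphere (0 : V d n) 1).Nonempty := by
    exact NormedSpace.sphere_nonempty.mpr zero_le_one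
  obtain ⟨c₀, hc₀K, hmin⟩ := hK.exists_isMinOn hKne (NN_continuous.continuousOn)
  have hc₀norm : ‖c₀‖ = 1 := mem_sphere_zero_iff_norm.mp hc₀K
  have hm : 0 < NN d n c₀ 1 := by
    rcases lt_or_eq_of_le (NN_nonneg c₀ 1) with h | h
    · exact h
    · exfalso
      have := c_eq_zero_of_NN c₀ h.symm
      rw [this] at hc₀norm
      simp at hc₀norm
  refine ⟨NN d n c₀ 1, hm, fun c => ?_⟩
  rcases eq_or_ne c 0 with rfl | hc
  · simpa using NN_nonneg (0 : V d n) 1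
  · have hs : 0 < ‖c‖ := norm_pos_iff.mpr hc
    set u : V d n := ‖c‖⁻¹ • c with hu
    have hus : u ∈ Metric.sphere (0 : V d n) 1 := by
      rw [mem_sphere_zero_iff_norm, hu, norm_smul]
      simp [abs_of_pos (inv_pos.mpr hs), inv_mul_cancel₀ hs.ne']
    have h1 : NN d n c₀ 1 ≤ NN d n u 1 := hmin hus
    have h2 : NN d n u 1 = ‖c‖⁻¹ * NN d n c 1 :=
      NN_smul _ c one_pos le_rfl (inv_pos.mpr hs)
    rw [h2] at h1
    calc NN d n c₀ 1 * ‖c‖ ≤ (‖c‖⁻¹ * NN d n c 1) * ‖c‖ :=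
          mul_le_mul_of_nonneg_right h1 hs.le
      _ = NN d n c 1 := by field_simp

/-- diagonal scaling of coefficients -/
noncomputable def Dscale (ρ : ℝ) (c : V d n) : V d n :=
  fun i => ρ ^ (i.1.sum fun _ e => e) * c i

theorem ev_Dscale (ρ : ℝ) (c : V d n) (y : EuclideanSpace ℝ (Fin n)) :
    ev d n (Dscale ρ c) y = ev d n c (ρ • y) := by
  rw [ev_smul_pt]
  unfold ev Dscale
  apply Finset.sum_congr rfl
  intro i _
  ring

theorem NN_scale (ρ : ℝ) (hρ : 0 < ρ) (c : V d n) :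
    NN d n c ρ = NN d n (Dscale ρ c) 1 := by
  unfold NN
  congr 1
  unfold oscSet
  ext t
  constructor
  · rintro ⟨a, ha, b, hb, rfl⟩
    refine ⟨ρ⁻¹ • a, ?_, ρ⁻¹ • b, ?_, ?_⟩
    · rw [mem_ball_zero_iff, norm_smul, Real.norm_eq_abs, abs_of_pos (inv_pos.mpr hρ)]
      rw [mem_ball_zero_iff] at ha
      rw [inv_mul_lt_iff₀ hρ, mul_one]
      exact ha
    · rw [mem_ball_zero_iff, norm_smul, Real.norm_eq_abs, abs_of_pos (inv_pos.mpr hρ)]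
      rw [mem_ball_zero_iff] at hb
      rw [inv_mul_lt_iff₀ hρ, mul_one]
      exact hb
    · rw [ev_Dscale, ev_Dscale]
      simp [smul_smul, mul_inv_cancel₀ hρ.ne']
  · rintro ⟨a, ha, b, hb, rfl⟩
    refine ⟨ρ • a, ?_, ρ • b, ?_, ?_⟩
    · rw [mem_ball_zero_iff, norm_smul, Real.norm_eq_abs, abs_of_pos hρ]
      rw [mem_ball_zero_iff] at ha
      calc ρ * ‖a‖ < ρ * 1 := by exact mul_lt_mul_of_pos_left ha hρ
        _ = ρ := mul_one _
    · rw [mem_ball_zero_iff, norm_smul, Real.norm_eq_abs, abs_of_pos hρ]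
      rw [mem_ball_zero_iff] at hb
      calc ρ * ‖b‖ < ρ * 1 := by exact mul_lt_mul_of_pos_left hb hρ
        _ = ρ := mul_one _
    · rw [ev_Dscale, ev_Dscale]

theorem deg_pos (i : ↥(monSet d n)) : 1 ≤ (i.1.sum fun _ e => e) := by
  by_contra h
  push_neg at h
  have h0 : (i.1.sum fun _ e => e) = 0 := by omega
  have hz : i.1 = 0 := by
    ext j
    have hle : i.1 j ≤ i.1.sum fun _ e => e := by
      rcases em (j ∈ i.1.support) with hmem | hmem
      · exact Finset.single_le_sum (fun _ _ => Nat.zero_le _) hmem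
      · simp [Finsupp.notMem_support_iff.mp hmem]
    simp only [Finsupp.coe_zero, Pi.zero_apply]
    omega
  exact ((mem_monSet d n).mp i.2).2 hz

theorem norm_Dscale_le {ρ : ℝ} (hρ0 : 0 < ρ) (hρ : ρ ≤ 1) (c : V d n) :
    ‖Dscale ρ c‖ ≤ ρ * ‖c‖ := by
  apply pi_norm_le_iff_of_nonneg (by positivity) |>.mpr
  intro i
  rw [show Dscale ρ c i = ρ ^ (i.1.sum fun _ e => e) * c i from rfl]
  rw [Real.norm_eq_abs, abs_mul, abs_pow, abs_of_pos hρ0]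
  calc ρ ^ (i.1.sum fun _ e => e) * |c i| ≤ ρ ^ 1 * |c i| := by
        apply mul_le_mul_of_nonneg_right _ (abs_nonneg _)
        exact pow_le_pow_of_le_one hρ0.le hρ (deg_pos i)
    _ = ρ * |c i| := by rw [pow_one]
    _ ≤ ρ * ‖c‖ := by
        apply mul_le_mul_of_nonneg_left _ hρ0.le
        exact norm_le_pi_norm c i

theorem aeval_eq_eval'' {n : ℕ} (f : Fin n → ℝ) (p : MvPolynomial (Fin n) ℝ) :
    aeval f p = eval f p := by
  rw [aeval_def, Algebra.algebraMap_self]; rfl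

theorem eval_bind₁' {n : ℕ} (x : Fin n → ℝ) (R : ℝ) (y : Fin n → ℝ) (Q : MvPolynomial (Fin n) ℝ) :
    eval y (bind₁ (fun j => C (x j) + C R * X j) Q) = eval (fun j => x j + R * y j) Q := by
  have h := aeval_bind₁ (R := ℝ) (S := ℝ) y (fun j => C (x j) + C R * X j) Q
  rw [aeval_eq_eval''] at h
  rw [h, ← aeval_eq_eval'']
  have : (fun i => (aeval (R := ℝ) y) (C (x i) + C R * X i)) = fun j => x j + R * y j := by
    funext j
    simp
  rw [this]

theorem tdb (n d : ℕ) (f : Fin n → MvPolynomial (Fin n) ℝ) (hf : ∀ j, (f j).totalDegree ≤ 1)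
    (Q : MvPolynomial (Fin n) ℝ) (hQ : Q.totalDegree ≤ d) : (bind₁ f Q).totalDegree ≤ d := by
  rw [bind₁, aeval_def, eval₂_eq']
  refine (totalDegree_finset_sum _ _).trans (Finset.sup_le fun α hα => ?_)
  refine (totalDegree_mul _ _).trans ?_
  have h1 : (algebraMap ℝ (MvPolynomial (Fin n) ℝ) (coeff α Q)).totalDegree = 0 := by
    rw [MvPolynomial.algebraMap_eq, totalDegree_C]
  rw [h1, zero_add]
  refine (totalDegree_finset_prod _ _).trans ?_
  calc ∑ j : Fin n, ((f j) ^ (α j)).totalDegree ≤ ∑ j : Fin n, α j * 1 := by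
        apply Finset.sum_le_sum
        intro j _
        exact (totalDegree_pow _ _).trans (Nat.mul_le_mul_left _ (hf j))
    _ = ∑ j : Fin n, α j := by simp
    _ = α.sum fun _ e => e := by rw [Finsupp.sum_fintype _ _ (fun _ => rfl)]
    _ ≤ Q.totalDegree := le_totalDegree hα
    _ ≤ d := hQ

theorem eval_eq_ev {d n : ℕ} (Q : MvPolynomial (Fin n) ℝ) (hQ : Q.totalDegree ≤ d)
    (y : EuclideanSpace ℝ (Fin n)) :
    MvPolynomial.eval (fun j => y j) Q = MvPolynomial.coeff 0 Q +
      ev d n (fun i => MvPolynomial.coeff i.1 Q) y := by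
  classical
  set g : (Fin n →₀ ℕ) → ℝ := fun α => MvPolynomial.coeff α Q * ∏ j : Fin n, y j ^ α j with hg
  have h0 : (0 : Fin n →₀ ℕ) ∉ monSet d n := fun h => ((mem_monSet d n).mp h).2 rfl
  have hrhs : MvPolynomial.coeff 0 Q + ev d n (fun i => MvPolynomial.coeff i.1 Q) y =
      ∑ α ∈ insert 0 (monSet d n), g α := by
    rw [Finset.sum_insert h0]
    congr 1
    · simp [hg]
    · unfold ev
      rw [← Finset.sum_coe_sort (monSet d n) g]
  rw [hrhs, MvPolynomial.eval_eq']
  apply Finset.sum_subset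
  · intro α hα
    rcases eq_or_ne α 0 with rfl | hne
    · exact Finset.mem_insert_self _ _
    · apply Finset.mem_insert_of_mem
      rw [mem_monSet]
      exact ⟨(MvPolynomial.le_totalDegree hα).trans hQ, hne⟩
  · intro α _ hα
    simp [hg, MvPolynomial.notMem_support_iff.mp hα]

theorem polySeminorm_def (n : ℕ) (Q : MvPolynomial (Fin n) ℝ) (I : Set (EuclideanSpace ℝ (Fin n))) :
    polySeminorm n Q I = sSup {t : ℝ | ∃ a ∈ I, ∃ b ∈ I,
      t = |MvPolynomial.eval (fun i => a i) Q - MvPolynomial.eval (fun i => b i) Q|} := rfl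

theorem polySeminorm_ball_eq {d n : ℕ} (Q : MvPolynomial (Fin n) ℝ) (hQ : Q.totalDegree ≤ d)
    (x : EuclideanSpace ℝ (Fin n)) (R ρ : ℝ) (hR : 0 < R) (hρ : 0 < ρ) :
    polySeminorm n Q (Metric.ball x (R * ρ)) =
      NN d n (fun i => MvPolynomial.coeff i.1
        (MvPolynomial.bind₁ (fun j => MvPolynomial.C (x j) + MvPolynomial.C R * MvPolynomial.X j) Q)) ρ := by
  classical
  set Q' := MvPolynomial.bind₁ (fun j => MvPolynomial.C (x j) + MvPolynomial.C R * MvPolynomial.X j) Q with hQ'def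
  have hQ' : Q'.totalDegree ≤ d := by
    apply tdb n d _ _ Q hQ
    intro j
    refine (MvPolynomial.totalDegree_add _ _).trans ?_
    have h1 : (MvPolynomial.C (x j) : MvPolynomial (Fin n) ℝ).totalDegree = 0 :=
      MvPolynomial.totalDegree_C _
    have h2 : (MvPolynomial.C R * MvPolynomial.X j : MvPolynomial (Fin n) ℝ).totalDegree ≤ 1 := by
      refine (MvPolynomial.totalDegree_mul _ _).trans ?_
      rw [MvPolynomial.totalDegree_C, MvPolynomial.totalDegree_X]
    omega
  set c' : V d n := fun i => MvPolynomial.coeff i.1 Q' with hc'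
  have keyev : ∀ b : EuclideanSpace ℝ (Fin n),
      MvPolynomial.eval (fun j => (x + R • b) j) Q =
        MvPolynomial.coeff 0 Q' + ev d n c' b := by
    intro b
    have h1 := eval_bind₁' (fun j => x j) R (fun j => b j) Q
    have h2 : (fun j => (x + R • b) j) = (fun j => x j + R * b j) := rfl
    rw [h2, ← h1, ← hQ'def]
    exact eval_eq_ev Q' hQ' b
  rw [polySeminorm_def]
  unfold NN
  congr 1
  unfold oscSet
  ext t
  constructor
  · rintro ⟨a, ha, a', ha', rfl⟩
    refine ⟨R⁻¹ • (a - x), ?_, R⁻¹ • (a' - x), ?_, ?_⟩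
    · rw [mem_ball_zero_iff, norm_smul, Real.norm_eq_abs, abs_of_pos (inv_pos.mpr hR)]
      rw [Metric.mem_ball, dist_eq_norm] at ha
      rw [inv_mul_lt_iff₀ hR]
      exact ha
    · rw [mem_ball_zero_iff, norm_smul, Real.norm_eq_abs, abs_of_pos (inv_pos.mpr hR)]
      rw [Metric.mem_ball, dist_eq_norm] at ha'
      rw [inv_mul_lt_iff₀ hR]
      exact ha'
    · have e1 : x + R • (R⁻¹ • (a - x)) = a := by
        rw [smul_smul, mul_inv_cancel₀ hR.ne', one_smul]
        abel
      have e2 : x + R • (R⁻¹ • (a' - x)) = a' := by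
        rw [smul_smul, mul_inv_cancel₀ hR.ne', one_smul]
        abel
      have k1 := keyev (R⁻¹ • (a - x))
      have k2 := keyev (R⁻¹ • (a' - x))
      rw [e1] at k1
      rw [e2] at k2
      rw [k1, k2]
      ring_nf
  · rintro ⟨b, hb, b', hb', rfl⟩
    refine ⟨x + R • b, ?_, x + R • b', ?_, ?_⟩
    · rw [Metric.mem_ball, dist_eq_norm]
      rw [mem_ball_zero_iff] at hb
      have : x + R • b - x = R • b := by abel
      rw [this, norm_smul, Real.norm_eq_abs, abs_of_pos hR]
      exact (mul_lt_mul_of_pos_left hb hR)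
    · rw [Metric.mem_ball, dist_eq_norm]
      rw [mem_ball_zero_iff] at hb'
      have : x + R • b' - x = R • b' := by abel
      rw [this, norm_smul, Real.norm_eq_abs, abs_of_pos hR]
      exact (mul_lt_mul_of_pos_left hb' hR)
    · rw [keyev b, keyev b']
      ring_nf

theorem core {d n : ℕ} (hne : Nonempty ↥(monSet d n)) :
    ∃ C : ℝ, 0 < C ∧ ∀ c : V d n, ∀ ρ : ℝ, 0 < ρ → ρ ≤ 1 →
      NN d n c ρ ≤ C * ρ * NN d n c 1 := by
  obtain ⟨m, hm, hlow⟩ := exists_lower hne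
  have hK : 0 < (Finset.univ.card (α := ↥(monSet d n)) : ℝ) := by
    have := Finset.univ_nonempty (α := ↥(monSet d n))
    exact_mod_cast Finset.card_pos.mpr this
  set K : ℝ := (Finset.univ.card (α := ↥(monSet d n)) : ℝ) with hKdef
  refine ⟨2 * K / m, by positivity, fun c ρ hρ0 hρ1 => ?_⟩
  have h1 : NN d n c ρ = NN d n (Dscale ρ c) 1 := NN_scale ρ hρ0 c
  have h2 : NN d n (Dscale ρ c) 1 ≤ 2 * ∑ i : ↥(monSet d n), |Dscale ρ c i| :=
    NN_le _ le_rfl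
  have h3 : ∑ i : ↥(monSet d n), |Dscale ρ c i| ≤ K * ‖Dscale ρ c‖ := by
    rw [hKdef]
    calc ∑ i : ↥(monSet d n), |Dscale ρ c i| ≤ ∑ _i : ↥(monSet d n), ‖Dscale ρ c‖ := by
          apply Finset.sum_le_sum
          intro i _
          exact norm_le_pi_norm (Dscale ρ c) i
      _ = (Finset.univ.card (α := ↥(monSet d n)) : ℝ) * ‖Dscale ρ c‖ := by
          rw [Finset.sum_const, nsmul_eq_mul]
  have h4 : ‖Dscale ρ c‖ ≤ ρ * ‖c‖ := norm_Dscale_le hρ0 hρ1 c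
  have h5 : m * ‖c‖ ≤ NN d n c 1 := hlow c
  have hnorm : 0 ≤ ‖c‖ := norm_nonneg c
  calc NN d n c ρ ≤ 2 * (K * (ρ * ‖c‖)) := by
        rw [h1]
        refine h2.trans ?_
        have := h3.trans (mul_le_mul_of_nonneg_left h4 hK.le)
        linarith
    _ ≤ 2 * K / m * ρ * NN d n c 1 := by
        rw [div_mul_eq_mul_div, div_mul_eq_mul_div, le_div_iff₀ hm]
        calc 2 * (K * (ρ * ‖c‖)) * m = 2 * K * ρ * (m * ‖c‖) := by ring
          _ ≤ 2 * K * ρ * NN d n c 1 := by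
              apply mul_le_mul_of_nonneg_left h5
              positivity

theorem stmt_1 (d n : ℕ) (hd : 1 ≤ d) (hn : 1 ≤ n) :
    ∃ C : ℝ, 0 < C ∧ ∀ (Q : MvPolynomial (Fin n) ℝ), Q.totalDegree ≤ d →
      ∀ (x : EuclideanSpace ℝ (Fin n)) (r R : ℝ), 0 < r → r ≤ R →
        polySeminorm n Q (Metric.ball x r) ≤
          C * (r / R) * polySeminorm n Q (Metric.ball x R) := by
  have hne : Nonempty ↥(monSet d n) := by
    refine ⟨⟨Finsupp.single ⟨0, hn⟩ 1, ?_⟩⟩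
    rw [mem_monSet]
    constructor
    · rw [Finsupp.sum_single_index rfl]
      exact hd
    · intro h
      have := DFunLike.congr_fun h (⟨0, hn⟩ : Fin n)
      simp at this
  obtain ⟨C, hC, hcore⟩ := core hne
  refine ⟨C, hC, fun Q hQ x r R hr hrR => ?_⟩
  have hR : 0 < R := lt_of_lt_of_le hr hrR
  have hρ0 : 0 < r / R := by positivity
  have hρ1 : r / R ≤ 1 := by
    rw [div_le_one hR]
    exact hrR
  have e1 : polySeminorm n Q (Metric.ball x r) =
      NN d n (fun i => MvPolynomial.coeff i.1
        (MvPolynomial.bind₁ (fun j => MvPolynomial.C (x j) + MvPolynomial.C R * MvPolynomial.X j) Q)) (r / R) := by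
    have := polySeminorm_ball_eq (d := d) Q hQ x R (r / R) hR hρ0
    rwa [show R * (r / R) = r by field_simp] at this
  have e2 : polySeminorm n Q (Metric.ball x R) =
      NN d n (fun i => MvPolynomial.coeff i.1
        (MvPolynomial.bind₁ (fun j => MvPolynomial.C (x j) + MvPolynomial.C R * MvPolynomial.X j) Q)) 1 := by
    have := polySeminorm_ball_eq (d := d) Q hQ x R 1 hR one_pos
    rwa [mul_one] at this
  rw [e1, e2]
  exact hcore _ (r / R) hρ0 hρ1
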